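/- Let M be a d×d matrix whose entries are homogeneous linear forms in variables x₀,…,xₙ over an algebraically closed field k, with f = det(M) not identically zero. Then for every point pt of the projective hypersurface X = {f = 0}, the corank of the evaluated matrix M|_pt satisfies 1 ≤ corank(M|_pt) ≤ mult(X, pt), where mult(X,pt) is the multiplicity of the hypersurface at pt (the order of vanishing of f at pt). -/

import Mathlib

open Polynomial Matrix


lemma degree_one_single {σ : Type*} (m : σ →₀ ℕ) (h : m.degree = 1) :
    ∃ j, m = Finsupp.single j 1 := by
  classical
  have hs : m.support.Nonempty := by
    rw [Finset.nonempty_iff_ne_empty]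
    intro he
    rw [Finsupp.degree_apply, he] at h
    simp at h
  obtain ⟨j, hj⟩ := hs
  refine ⟨j, ?_⟩
  have hmj : 1 ≤ m j := Nat.one_le_iff_ne_zero.2 (Finsupp.mem_support_iff.1 hj)
  have hsub : m.support = {j} := by
    apply Finset.eq_singleton_iff_unique_mem.2
    refine ⟨hj, fun x hx => ?_⟩
    by_contra hxj
    have h2 : 2 ≤ m.degree := by
      rw [Finsupp.degree_apply]
      calc 2 = 1 + 1 := rfl
      _ ≤ m x + m j := Nat.add_le_add (Nat.one_le_iff_ne_zero.2 (Finsupp.mem_support_iff.1 hx)) hmj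
      _ ≤ ∑ i ∈ m.support, m i := by
          rw [← Finset.sum_pair hxj]
          exact Finset.sum_le_sum_of_subset (by intro y hy; simp at hy; rcases hy with rfl|rfl <;> assumption)
    omega
  have hval : m j = 1 := by
    rw [Finsupp.degree_apply, hsub, Finset.sum_singleton] at h
    exact h
  ext x
  by_cases hx : x = j
  · subst hx; simp [hval]
  · rw [Finsupp.single_apply, if_neg (Ne.symm hx)]
    by_contra hne
    have : x ∈ m.support := Finsupp.mem_support_iff.2 hne
    rw [hsub] at this; simp at this; exact hx this

lemma aeval_linear {k : Type*} [CommRing k] {N : ℕ} {p : MvPolynomial (Fin N) k}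
    (hp : p.IsHomogeneous 1) (pt v : Fin N → k) :
    (MvPolynomial.aeval (fun i => Polynomial.C (pt i) + Polynomial.X * Polynomial.C (v i)) p)
      = Polynomial.C (MvPolynomial.eval pt p) + Polynomial.X * Polynomial.C (MvPolynomial.eval v p) := by
  conv_lhs => rw [MvPolynomial.as_sum p]
  conv_rhs => rw [MvPolynomial.as_sum p]
  rw [map_sum, map_sum (MvPolynomial.eval pt), map_sum (MvPolynomial.eval v), map_sum (Polynomial.C),
    map_sum (Polynomial.C), Finset.mul_sum, ← Finset.sum_add_distrib]
  apply Finset.sum_congr rfl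
  intro m hm
  obtain ⟨j, rfl⟩ := degree_one_single m (hp.coeff_eq_zero (d := m) |> fun h => by
    by_contra hne; exact MvPolynomial.mem_support_iff.1 hm (h hne))
  simp [MvPolynomial.aeval_monomial, MvPolynomial.eval_monomial, Finsupp.prod_single_index]
  ring


lemma card_filter_lt_fin (d c : ℕ) (h : c ≤ d) :
    (Finset.univ.filter (fun i : Fin d => i.1 < c)).card = c := by
  have he : Finset.univ.filter (fun i : Fin d => i.1 < c)
      = Finset.map (Fin.castLEEmb h) Finset.univ := by
    ext x
    simp only [Finset.mem_filter, Finset.mem_univ, true_and, Finset.mem_map,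
      Fin.castLEEmb, Function.Embedding.coeFn_mk]
    constructor
    · intro hx; exact ⟨⟨x.1, hx⟩, by ext; simp⟩
    · rintro ⟨a, rfl⟩; exact a.2
  rw [he, Finset.card_map, Finset.card_univ, Fintype.card_fin]

lemma coeff_det_lt_corank {k : Type*} [Field k] {d : ℕ} (A B : Matrix (Fin d) (Fin d) k)
    {m : ℕ} (hm : m < d - A.rank) :
    (Matrix.det (Matrix.of fun i j =>
      Polynomial.C (A i j) + Polynomial.X * Polynomial.C (B i j))).coeff m = 0 := by
  classical
  set c := d - A.rank with hc
  have hcd : c ≤ d := Nat.sub_le _ _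
  set K := LinearMap.ker (Aᵀ.mulVecLin) with hKdef
  have hKr : Module.finrank k K = c := by
    have h1 := LinearMap.finrank_range_add_finrank_ker (Aᵀ.mulVecLin)
    have h2 : Module.finrank k (LinearMap.range Aᵀ.mulVecLin) = A.rank := by
      rw [← Matrix.rank_transpose A]; rfl
    have h3 : Module.finrank k (Fin d → k) = d := by simp
    have h4 : A.rank ≤ d := by
      have := Matrix.rank_le_card_width A; simpa using this
    rw [hKdef]
    rw [h2, h3] at h1
    omega
  obtain ⟨Wc, hcompl⟩ := Submodule.exists_isCompl K
  set w := Module.finrank k Wc with hw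
  have hcw : c + w = d := by
    have := Submodule.finrank_add_eq_of_isCompl hcompl
    rw [hKr] at this; simpa using this
  let bK : Module.Basis (Fin c) k K := (Module.finBasis k K).reindex (finCongr hKr)
  let bW : Module.Basis (Fin w) k Wc := Module.finBasis k Wc
  let e : (Fin c ⊕ Fin w) ≃ Fin d := finSumFinEquiv.trans (finCongr hcw)
  let b : Module.Basis (Fin d) k (Fin d → k) :=
    (((bK.prod bW).map (K.prodEquivOfIsCompl Wc hcompl)).reindex e)
  have hbK : ∀ i : Fin d, i.1 < c → b i ∈ K := by
    intro i hi
    have he : e.symm i = Sum.inl ⟨i.1, hi⟩ := by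
      rw [Equiv.symm_apply_eq]
      simp only [e, Equiv.trans_apply, finSumFinEquiv_apply_left, finCongr_apply]
      ext; simp
    rw [Module.Basis.reindex_apply, he, Module.Basis.map_apply, Module.Basis.prod_apply]
    simp only [Sum.elim_inl, Function.comp_apply, LinearMap.coe_inl,
      Submodule.coe_prodEquivOfIsCompl']
    simp only [Submodule.coe_zero, add_zero]  -- (bK _, 0) ↦ ↑(bK _) + 0
    exact Submodule.coe_mem _
  -- row property
  have hrow : ∀ i : Fin d, i.1 < c → ∀ j, (∑ l, b i l * A l j) = 0 := by
    intro i hi j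
    have h0 : Aᵀ.mulVecLin (b i) = 0 := (LinearMap.mem_ker).1 (hbK i hi)
    have := congrFun h0 j
    have h2 : (b i ᵥ* A) j = 0 := by
      simpa [Matrix.mulVecLin_apply] using congrFun h0 j
    rw [← h2]
    simp [Matrix.vecMul, dotProduct]
  -- the matrix P
  set T := (Pi.basisFun k (Fin d)).toMatrix b with hT
  set P := Tᵀ with hPd
  have hP : ∀ i j, P i j = b i j := by
    intro i j
    simp [hPd, hT, Matrix.transpose_apply, Module.Basis.toMatrix_apply, Pi.basisFun_repr]
  have hdetP : IsUnit P.det := by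
    rw [hPd, Matrix.det_transpose]
    have : Invertible T := (Pi.basisFun k (Fin d)).invertibleToMatrix b
    exact Matrix.isUnit_det_of_invertible T
  set N : Matrix (Fin d) (Fin d) k[X] :=
    Matrix.of (fun i j => Polynomial.C (A i j) + Polynomial.X * Polynomial.C (B i j)) with hN
  set PN := P.map Polynomial.C * N with hPN
  set W : Matrix (Fin d) (Fin d) k[X] :=
    Matrix.of (fun i j => if i.1 < c then Polynomial.C ((P * B) i j) else PN i j) with hW
  have hfact : PN = Matrix.of (fun i j =>
      (if i.1 < c then (Polynomial.X : k[X]) else 1) * W i j) := by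
    ext i j
    by_cases hi : i.1 < c
    · simp only [hPN, hW, Matrix.mul_apply, Matrix.map_apply, Matrix.of_apply, hN, if_pos hi]
      have : ∀ l, Polynomial.C (P i l) * (Polynomial.C (A l j) + Polynomial.X * Polynomial.C (B l j))
          = Polynomial.C (P i l * A l j) + Polynomial.X * Polynomial.C (P i l * B l j) := by
        intro l; rw [_root_.map_mul, _root_.map_mul]; ring
      rw [Finset.sum_congr rfl (fun l _ => this l), Finset.sum_add_distrib, ← map_sum,
        ← Finset.mul_sum, ← map_sum]
      have hz : (∑ l, P i l * A l j) = 0 := by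
        rw [Finset.sum_congr rfl (fun l _ => by rw [hP i l])]
        exact hrow i hi j
      rw [hz, map_zero, zero_add]
    · simp only [hW, Matrix.of_apply, if_neg hi, one_mul]
  have hdet : PN.det = Polynomial.X ^ c * W.det := by
    rw [hfact, Matrix.det_mul_column]
    congr 1
    rw [Finset.prod_ite, Finset.prod_const, Finset.prod_const_one, mul_one,
      card_filter_lt_fin d c hcd]
  have hdvd : (Polynomial.X : k[X]) ^ c ∣ N.det := by
    have h1 : Polynomial.C P.det * N.det = Polynomial.X ^ c * W.det := by
      rw [← hdet, hPN, Matrix.det_mul, RingHom.map_det, RingHom.mapMatrix_apply]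
    have hu : IsUnit (Polynomial.C P.det) := hdetP.map Polynomial.C
    exact (IsUnit.dvd_mul_left hu).mp ⟨W.det, h1⟩
  obtain ⟨q, hq⟩ := hdvd
  show N.det.coeff m = 0
  rw [hq, mul_comm, coeff_mul_X_pow', if_neg (not_le.2 hm)]


section main
variable {k : Type*} [Field k] [CharZero k] {d n : ℕ}

lemma rank_lt_of_det_eq_zero {A : Matrix (Fin d) (Fin d) k} (h : A.det = 0) :
    A.rank < d := by
  classical
  have hle : A.rank ≤ d := by simpa using A.rank_le_card_width
  rcases lt_or_eq_of_le hle with h' | h'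
  · exact h'
  exfalso
  have htop : LinearMap.range A.mulVecLin = ⊤ := by
    apply Submodule.eq_top_of_finrank_eq
    show A.rank = _
    simpa using h'
  have hsurj : Function.Surjective A.mulVec := by
    intro y
    obtain ⟨x, hx⟩ := (LinearMap.range_eq_top.1 htop) y
    exact ⟨x, hx⟩
  have hu : IsUnit A.det := A.isUnit_iff_isUnit_det.mp (Matrix.mulVec_surjective_iff_isUnit.mp hsurj)
  exact hu.ne_zero h

lemma eval_one_aeval (pt v : Fin (n+1) → k) (p : MvPolynomial (Fin (n+1)) k) :
    Polynomial.eval 1 (MvPolynomial.aeval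
      (fun i => Polynomial.C (pt i) + Polynomial.X * Polynomial.C (v i)) p)
    = MvPolynomial.eval (fun i => pt i + v i) p := by
  rw [MvPolynomial.aeval_def,
    show (Polynomial.eval (1:k)) = ⇑(Polynomial.evalRingHom (1:k)) from rfl,
    MvPolynomial.eval₂_comp_left]
  have h1 : (Polynomial.evalRingHom (1:k)).comp (algebraMap k k[X]) = RingHom.id k := by
    ext x; simp
  have h2 : (⇑(Polynomial.evalRingHom (1:k)) ∘ fun i =>
      Polynomial.C (pt i) + Polynomial.X * Polynomial.C (v i)) = fun i => pt i + v i := by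
    funext i; simp
  rw [h1, h2]
  rfl
end main

/-- The multiplicity of the hypersurface `{f = 0}` at the point `pt`: the minimal order of
vanishing at `t = 0` of `t ↦ f(pt + t·v)` over all directions `v`. -/
noncomputable def multiplicityAt {k : Type*} [Field k] {n : ℕ}
    (f : MvPolynomial (Fin n) k) (pt : Fin n → k) : ℕ :=
  sInf {m : ℕ | ∃ v : Fin n → k,
    (MvPolynomial.aeval
      (fun i => Polynomial.C (pt i) + Polynomial.X * Polynomial.C (v i)) f).coeff m ≠ 0}

/-- for a determinantal representation by linear forms,
1 ≤ corank(M|_pt) ≤ mult(X, pt) at every point pt of the hypersurface X = {det M = 0}. -/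
theorem stmt1 {k : Type*} [Field k] [IsAlgClosed k] [CharZero k] {d n : ℕ}
    (M : Matrix (Fin d) (Fin d) (MvPolynomial (Fin (n + 1)) k))
    (hlin : ∀ i j, (M i j).IsHomogeneous 1)
    (hdet : M.det ≠ 0)
    (pt : Fin (n + 1) → k) (hpt : pt ≠ 0)
    (hX : MvPolynomial.eval pt M.det = 0) :
    1 ≤ d - (M.map (MvPolynomial.eval pt)).rank ∧
    d - (M.map (MvPolynomial.eval pt)).rank ≤ multiplicityAt M.det pt := by
  classical
  set A := M.map (MvPolynomial.eval pt) with hA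
  have hdetA : A.det = 0 := by
    rw [hA, ← RingHom.mapMatrix_apply, ← RingHom.map_det]
    exact hX
  have hrk : A.rank < d := rank_lt_of_det_eq_zero hdetA
  refine ⟨by omega, ?_⟩
  -- key fact: for every v, small coefficients vanish
  have key : ∀ (v : Fin (n+1) → k) (m : ℕ), m < d - A.rank →
      (MvPolynomial.aeval
        (fun i => Polynomial.C (pt i) + Polynomial.X * Polynomial.C (v i)) M.det).coeff m = 0 := by
    intro v m hm
    set g := fun i => Polynomial.C (pt i) + Polynomial.X * Polynomial.C (v i) with hg
    have h1 : MvPolynomial.aeval g M.det = (M.map (MvPolynomial.aeval g)).det := by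
      rw [AlgHom.map_det]; rfl
    have h2 : M.map (MvPolynomial.aeval g) = Matrix.of fun i j =>
        Polynomial.C (A i j) + Polynomial.X * Polynomial.C ((M.map (MvPolynomial.eval v)) i j) := by
      refine Matrix.ext fun i j => ?_
      simp only [Matrix.map_apply, Matrix.of_apply, hA]
      exact aeval_linear (hlin i j) pt v
    rw [h1, h2]
    exact coeff_det_lt_corank A (M.map (MvPolynomial.eval v)) hm
  apply le_csInf
  · -- nonempty
    obtain ⟨wv, hwv⟩ : ∃ wv : Fin (n+1) → k, MvPolynomial.eval wv M.det ≠ 0 := by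
      by_contra h
      push_neg at h
      exact hdet (MvPolynomial.funext (fun x => by rw [h x, map_zero]))
    set v := fun i => wv i - pt i with hv
    have hF : (MvPolynomial.aeval
        (fun i => Polynomial.C (pt i) + Polynomial.X * Polynomial.C (v i)) M.det) ≠ 0 := by
      intro h0
      apply hwv
      have := eval_one_aeval pt v M.det
      rw [h0] at this
      simp only [Polynomial.eval_zero] at this
      have h2 : (fun i => pt i + v i) = wv := by funext i; simp [hv]
      rw [h2] at this
      exact this.symm
    obtain ⟨m, hm⟩ : ∃ m, (MvPolynomial.aeval
        (fun i => Polynomial.C (pt i) + Polynomial.X * Polynomial.C (v i)) M.det).coeff m ≠ 0 := by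
      by_contra hc
      push_neg at hc
      exact hF (Polynomial.ext fun m => by rw [hc m, Polynomial.coeff_zero])
    exact ⟨m, v, hm⟩
  · rintro m ⟨v, hmv⟩
    by_contra h
    push_neg at h
    exact hmv (key v m h)
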